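/- Let p be a probability distribution on a finite set A and let p̂_M be the empirical distribution of M i.i.d. samples drawn from p. Then for every ε > 0, P(d_KL(p̂_M ‖ p) ≥ ε) ≤ (M+1)^{|A|} e^{-Mε}. -/

import Mathlib

open Finset
open scoped ENNReal

lemma prod_comp_count {A : Type*} [Fintype A] [DecidableEq A] {M : ℕ}
    (f : A → ℝ) (x : Fin M → A) :
    ∏ m, f (x m) = ∏ a, f a ^ ({m | x m = a} : Finset (Fin M)).card := by
  rw [← Finset.prod_fiberwise' Finset.univ x f]
  exact Finset.prod_congr rfl fun a _ => by rw [Finset.prod_const]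

lemma sanov_real_core {A : Type*} [Fintype A] [DecidableEq A] {M : ℕ} (hM : 1 ≤ M)
    (p : A → ℝ) (hp0 : ∀ a, 0 ≤ p a) (k : A → ℕ) (hk : ∑ a, k a = M) (ε : ℝ)
    (hKL : ε ≤ ∑ a, ((k a : ℝ) / M) * Real.log (((k a : ℝ) / M) / p a)) :
    ∑ x ∈ ({x : Fin M → A | ∀ a, ({m | x m = a} : Finset (Fin M)).card = k a} : Finset _),
      ∏ m, p (x m) ≤ Real.exp (-(M * ε)) := by
  have hMpos : (0 : ℝ) < M := by exact_mod_cast hM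
  set q : A → ℝ := fun a => (k a : ℝ) / M with hq
  have hq0 : ∀ a, 0 ≤ q a := fun a => by positivity
  have hqz : ∀ a, q a = 0 ↔ k a = 0 := by
    intro a; simp [hq, div_eq_zero_iff, hMpos.ne']
  set S : Finset (Fin M → A) :=
    ({x : Fin M → A | ∀ a, ({m | x m = a} : Finset (Fin M)).card = k a} : Finset _) with hS
  -- each term in S is ∏ a, p a ^ k a
  have hterm : ∀ (f : A → ℝ), ∀ x ∈ S, ∏ m, f (x m) = ∏ a, f a ^ k a := by
    intro f x hx
    rw [prod_comp_count]
    exact Finset.prod_congr rfl fun a _ => by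
      rw [(Finset.mem_filter.1 hx).2 a]
  -- card bound
  have hcard : (S.card : ℝ) * ∏ a, q a ^ k a ≤ 1 := by
    have h1 : ∑ x ∈ S, ∏ m, q (x m) = (S.card : ℝ) * ∏ a, q a ^ k a := by
      rw [Finset.sum_congr rfl (hterm q), Finset.sum_const, nsmul_eq_mul]
    have h2 : ∑ x ∈ S, ∏ m, q (x m) ≤ ∑ x : Fin M → A, ∏ m, q (x m) :=
      Finset.sum_le_sum_of_subset_of_nonneg (Finset.subset_univ S)
        (fun x _ _ => Finset.prod_nonneg fun m _ => hq0 _)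
    have h3 : ∑ x : Fin M → A, ∏ m, q (x m) = 1 := by
      rw [← Fintype.prod_sum (fun _ a => q a)]
      have : ∑ a, q a = 1 := by
        rw [hq, ← Finset.sum_div]
        rw [show ∑ a, ((k a : ℝ)) = (M : ℝ) by exact_mod_cast congrArg Nat.cast hk]
        exact div_self hMpos.ne'
      simp [this]
    rw [← h1]; rw [h3] at h2; exact h2
  -- factorization
  have hfac : ∏ a, p a ^ k a = (∏ a, q a ^ k a) * ∏ a, (p a / q a) ^ k a := by
    rw [← Finset.prod_mul_distrib]
    refine Finset.prod_congr rfl fun a _ => ?_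
    rcases Nat.eq_zero_or_pos (k a) with h | h
    · simp [h]
    · have hqa : q a ≠ 0 := fun h0 => by
        have := (hqz a).1 h0; omega
      rw [← mul_pow, mul_div_cancel₀ _ hqa]
  -- bound the likelihood-ratio product by exp(-M * KL)
  have hR0 : 0 ≤ ∏ a, (p a / q a) ^ k a :=
    Finset.prod_nonneg fun a _ => pow_nonneg (div_nonneg (hp0 a) (hq0 a)) _
  have hRle : ∏ a, (p a / q a) ^ k a
      ≤ ∏ a, Real.exp (-((M : ℝ) * (q a * Real.log (q a / p a)))) := by
    refine Finset.prod_le_prod (fun a _ => pow_nonneg (div_nonneg (hp0 a) (hq0 a)) _)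
      (fun a _ => ?_)
    rcases Nat.eq_zero_or_pos (k a) with h | h
    · have : q a = 0 := (hqz a).2 h
      simp [h, this]
    · have hqa : 0 < q a := lt_of_le_of_ne (hq0 a) (fun h0 => by
        have := (hqz a).1 h0.symm; omega)
      rcases eq_or_lt_of_le (hp0 a) with hpa | hpa
      · rw [← hpa, zero_div, zero_pow (by omega)]
        exact (Real.exp_pos _).le
      · have hMq : (M : ℝ) * q a = k a := by
          simp only [hq]; exact mul_div_cancel₀ _ hMpos.ne'
        have : (p a / q a) ^ k a = Real.exp ((k a : ℝ) * Real.log (p a / q a)) := by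
          rw [Real.exp_nat_mul, Real.exp_log (div_pos hpa hqa)]
        rw [this]
        apply le_of_eq
        congr 1
        rw [show p a / q a = (q a / p a)⁻¹ by rw [inv_div], Real.log_inv, ← hMq]
        ring
  have hexp : ∏ a, Real.exp (-((M : ℝ) * (q a * Real.log (q a / p a))))
      = Real.exp (-((M : ℝ) * ∑ a, q a * Real.log (q a / p a))) := by
    rw [← Real.exp_sum]
    congr 1
    rw [Finset.mul_sum, ← Finset.sum_neg_distrib]
  calc ∑ x ∈ S, ∏ m, p (x m) = (S.card : ℝ) * ∏ a, p a ^ k a := by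
        rw [Finset.sum_congr rfl (hterm p), Finset.sum_const, nsmul_eq_mul]
    _ = ((S.card : ℝ) * ∏ a, q a ^ k a) * ∏ a, (p a / q a) ^ k a := by
        rw [hfac]; ring
    _ ≤ ∏ a, (p a / q a) ^ k a := mul_le_of_le_one_left hR0 hcard
    _ ≤ Real.exp (-((M : ℝ) * ∑ a, q a * Real.log (q a / p a))) := by
        rw [← hexp]; exact hRle
    _ ≤ Real.exp (-(M * ε)) := by
        apply Real.exp_le_exp.2
        have := mul_le_mul_of_nonneg_left hKL hMpos.le
        linarith

open MeasureTheory ProbabilityTheory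

/-- Sanov's theorem on a finite alphabet (method-of-types bound): if
`X 1, …, X M` are i.i.d. samples from a distribution `p` on a finite set `A`,
and `p̂` denotes their empirical distribution, then for every `ε > 0`,
`P(d_KL(p̂ ‖ p) ≥ ε) ≤ (M+1)^{|A|} e^{-Mε}`. -/
theorem sanov_finite {A : Type*} [Fintype A] [DecidableEq A]
    [MeasurableSpace A] [MeasurableSingletonClass A]
    {Ω : Type*} [MeasurableSpace Ω] (P : Measure Ω) [IsProbabilityMeasure P]
    (M : ℕ) (hM : 1 ≤ M) (X : Fin M → Ω → A)
    (hmeas : ∀ m, Measurable (X m))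
    (hiid : iIndepFun X P)
    (p : A → ℝ) (hp0 : ∀ a, 0 ≤ p a) (hp1 : ∑ a, p a = 1)
    (hlaw : ∀ m a, P (X m ⁻¹' {a}) = ENNReal.ofReal (p a))
    (ε : ℝ) (hε : 0 < ε)
    (phat : Ω → A → ℝ)
    (hphat : ∀ ω a, phat ω a
      = (1 / (M : ℝ)) * ∑ m, (if X m ω = a then (1 : ℝ) else 0)) :
    P {ω | ε ≤ ∑ a, phat ω a * Real.log (phat ω a / p a)}
      ≤ ENNReal.ofReal (((M : ℝ) + 1) ^ (Fintype.card A)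
          * Real.exp (-(M * ε))) := by
  classical
  set cnt : Ω → A → ℕ := fun ω a => ({m | X m ω = a} : Finset (Fin M)).card with hcntdef
  have hcnt : ∀ ω a, phat ω a = (cnt ω a : ℝ) / M := by
    intro ω a
    rw [hphat ω a, Finset.sum_boole, one_div, inv_mul_eq_div]
  set E := {ω | ε ≤ ∑ a, phat ω a * Real.log (phat ω a / p a)} with hE
  set T : Finset (A → ℕ) := Fintype.piFinset (fun _ => Finset.range (M+1)) with hT
  set Ek : (A → ℕ) → Set Ω := fun k => {ω | ∀ a, cnt ω a = k a} with hEkdef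
  have hcount : ∀ ω, ∑ a, cnt ω a = M := by
    intro ω
    have h := Finset.sum_fiberwise (Finset.univ : Finset (Fin M))
      (fun m => X m ω) (fun _ => (1 : ℕ))
    simpa using h
  have hsub : E ⊆ ⋃ k ∈ T, (E ∩ Ek k) := by
    intro ω hω
    refine Set.mem_iUnion₂.2 ⟨cnt ω, ?_, hω, fun a => rfl⟩
    refine Fintype.mem_piFinset.2 fun a => Finset.mem_range.2 ?_
    exact Nat.lt_succ_of_le ((Finset.card_filter_le _ _).trans_eq (by simp))
  have hkey : ∀ k ∈ T, P (E ∩ Ek k) ≤ ENNReal.ofReal (Real.exp (-((M : ℝ) * ε))) := by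
    intro k _
    by_cases hgood : (∑ a, k a = M) ∧
        ε ≤ ∑ a, ((k a : ℝ) / M) * Real.log (((k a : ℝ) / M) / p a)
    · set S : Finset (Fin M → A) :=
        ({x : Fin M → A | ∀ a, ({m | x m = a} : Finset (Fin M)).card = k a} : Finset _)
        with hSdef
      have hsub2 : E ∩ Ek k ⊆ ⋃ x ∈ S, ⋂ m, X m ⁻¹' {x m} := by
        rintro ω ⟨-, hω⟩
        refine Set.mem_iUnion₂.2 ⟨fun m => X m ω, ?_, Set.mem_iInter.2 fun m => rfl⟩
        rw [hSdef, Finset.mem_filter]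
        exact ⟨Finset.mem_univ _, fun a => hω a⟩
      calc P (E ∩ Ek k) ≤ P (⋃ x ∈ S, ⋂ m, X m ⁻¹' {x m}) := measure_mono hsub2
        _ ≤ ∑ x ∈ S, P (⋂ m, X m ⁻¹' {x m}) := measure_biUnion_finset_le S _
        _ = ∑ x ∈ S, ENNReal.ofReal (∏ m, p (x m)) := by
            refine Finset.sum_congr rfl fun x _ => ?_
            have h := hiid.measure_inter_preimage_eq_mul Finset.univ
              (sets := fun m => ({x m} : Set A))
              (fun i _ => measurableSet_singleton _)
            rw [show ⋂ i ∈ (Finset.univ : Finset (Fin M)), X i ⁻¹' {x i}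
                = ⋂ m, X m ⁻¹' {x m} by simp] at h
            rw [h, Finset.prod_congr rfl fun m _ => hlaw m (x m),
              ← ENNReal.ofReal_prod_of_nonneg (fun m _ => hp0 (x m))]
        _ = ENNReal.ofReal (∑ x ∈ S, ∏ m, p (x m)) :=
            (ENNReal.ofReal_sum_of_nonneg
              (fun x _ => Finset.prod_nonneg fun m _ => hp0 (x m))).symm
        _ ≤ ENNReal.ofReal (Real.exp (-((M : ℝ) * ε))) :=
            ENNReal.ofReal_le_ofReal
              (sanov_real_core hM p hp0 k hgood.1 ε hgood.2)
    · have hempty : E ∩ Ek k = ∅ := by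
        ext ω
        simp only [Set.mem_inter_iff, Set.mem_empty_iff_false, iff_false, not_and]
        intro hωE hωk
        apply hgood
        have hka : ∀ a, (k a : ℝ) / M = phat ω a := fun a => by
          rw [hcnt ω a, hωk a]
        constructor
        · rw [← hcount ω]
          exact Finset.sum_congr rfl fun a _ => (hωk a).symm
        · simp only [hka]
          exact hωE
      rw [hempty, measure_empty]
      exact bot_le
  calc P E ≤ P (⋃ k ∈ T, E ∩ Ek k) := measure_mono hsub
    _ ≤ ∑ k ∈ T, P (E ∩ Ek k) := measure_biUnion_finset_le T _
    _ ≤ ∑ k ∈ T, ENNReal.ofReal (Real.exp (-((M : ℝ) * ε))) := Finset.sum_le_sum hkey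
    _ = (T.card : ℝ≥0∞) * ENNReal.ofReal (Real.exp (-((M : ℝ) * ε))) := by
        rw [Finset.sum_const, nsmul_eq_mul]
    _ ≤ ENNReal.ofReal (((M : ℝ) + 1) ^ (Fintype.card A) * Real.exp (-((M : ℝ) * ε))) := by
        have hTcard : T.card = (M + 1) ^ (Fintype.card A) := by
          simp [hT]
        rw [ENNReal.ofReal_mul (by positivity), hTcard,
          show ((M : ℝ) + 1) ^ (Fintype.card A)
            = (((M + 1) ^ (Fintype.card A) : ℕ) : ℝ) by push_cast; ring,
          ENNReal.ofReal_natCast]
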